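/- arXiv:1708.01517 — 4 statements merged into one kernel-verified Lean document; each statement's English description precedes it below -/
import Mathlib

section
/- (a) For every integer n ≥ 1 there exists a real polynomial P_n of degree at most 2n − 2 such that for all x > 0 the n-th derivative of the function x ↦ (tanh x)^{1/2} equals P_n(tanh x)·(tanh x)^{1/2 − n}·(1 − (tanh x)²). (b) For every n ∈ ℕ and every h₁ > 0 there exists C = C(n, h₁) > 0 such that for all real h ≥ h₁ and all integers j, the n-th derivative with respect to h of the function h ↦ (tanh(h·|j|))^{1/2} satisfies |∂_h^n (tanh(h·|j|))^{1/2}| ≤ C. -/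
open Real

lemma tanh_sq_lt_one (x : ℝ) : Real.tanh x ^ 2 < 1 := by
  rw [Real.tanh_eq_sinh_div_cosh, div_pow, div_lt_one (by positivity)]
  rw [Real.cosh_sq]; linarith

lemma hasDerivAt_tanh (x : ℝ) : HasDerivAt Real.tanh (1 - Real.tanh x ^ 2) x := by
  have h := (Real.hasDerivAt_sinh x).div (Real.hasDerivAt_cosh x) (Real.cosh_pos x).ne'
  have hfun : Real.tanh = fun y => Real.sinh y / Real.cosh y := by
    funext y; exact Real.tanh_eq_sinh_div_cosh y
  rw [hfun]
  refine h.congr_deriv ?_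
  have hc := (Real.cosh_pos x).ne'
  rw [div_pow]
  field_simp

lemma tanh_pos {x : ℝ} (hx : 0 < x) : 0 < Real.tanh x := by
  rw [Real.tanh_eq_sinh_div_cosh]
  exact div_pos (Real.sinh_pos_iff.mpr hx) (Real.cosh_pos x)

lemma tanh_strictMono : StrictMono Real.tanh := by
  apply strictMono_of_deriv_pos
  intro x
  rw [(hasDerivAt_tanh x).deriv]
  linarith [_root_.tanh_sq_lt_one x]

lemma tanh_lt_one (x : ℝ) : Real.tanh x < 1 := by
  nlinarith [_root_.tanh_sq_lt_one x, Real.tanh_eq_sinh_div_cosh x]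

lemma one_sub_tanh_sq_le (x : ℝ) : 1 - Real.tanh x ^ 2 ≤ 4 * Real.exp (-(2 * x)) := by
  have h1 : Real.exp x / 2 ≤ Real.cosh x := by
    rw [Real.cosh_eq]; have := Real.exp_pos (-x); linarith
  have h2 : Real.tanh x ^ 2 = 1 - 1 / Real.cosh x ^ 2 := by
    rw [Real.tanh_eq_sinh_div_cosh, div_pow]
    have hc : Real.cosh x ^ 2 ≠ 0 := by positivity
    field_simp
    nlinarith [Real.cosh_sq_sub_sinh_sq x]
  rw [h2]
  have h3 : 1 / Real.cosh x ^ 2 ≤ 1 / (Real.exp x / 2) ^ 2 := by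
    apply one_div_le_one_div_of_le (by positivity)
    exact pow_le_pow_left₀ (by positivity) h1 2
  have h4 : 1 / (Real.exp x / 2) ^ 2 = 4 * Real.exp (-(2 * x)) := by
    rw [Real.exp_neg]
    rw [show (2:ℝ) * x = x + x by ring, Real.exp_add]
    field_simp
    ring
  linarith

lemma sqrt_tanh_key : ∀ n : ℕ, 1 ≤ n → ∃ P : Polynomial ℝ, P.natDegree ≤ 2 * n - 2 ∧
    ∀ a : ℝ, 0 < a → ∀ x : ℝ, 0 < x →
      iteratedDeriv n (fun t : ℝ => Real.sqrt (Real.tanh (t * a))) x =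
        a ^ n * (Polynomial.eval (Real.tanh (x * a)) P *
          Real.tanh (x * a) ^ ((1:ℝ)/2 - (n:ℝ)) * (1 - Real.tanh (x * a) ^ 2)) := by
  intro n hn
  induction n, hn using Nat.le_induction with
  | base =>
    refine ⟨Polynomial.C ((1:ℝ)/2), by simp, ?_⟩
    intro a ha x hx
    have ht0 : 0 < Real.tanh (x * a) := tanh_pos (mul_pos hx ha)
    have hta : HasDerivAt (fun t : ℝ => Real.tanh (t * a))
        ((1 - Real.tanh (x * a) ^ 2) * a) x :=
      by have := (_root_.hasDerivAt_tanh (x * a)).comp x (hasDerivAt_mul_const a); exact this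
    have hs : HasDerivAt (fun t : ℝ => Real.tanh (t * a) ^ ((1:ℝ)/2))
        ((1 - Real.tanh (x * a) ^ 2) * a * ((1:ℝ)/2) *
          Real.tanh (x * a) ^ ((1:ℝ)/2 - 1)) x :=
      hta.rpow_const (Or.inl ht0.ne')
    have hfun : (fun t : ℝ => Real.sqrt (Real.tanh (t * a))) =
        fun t : ℝ => Real.tanh (t * a) ^ ((1:ℝ)/2) := by
      funext t; rw [Real.sqrt_eq_rpow]
    rw [iteratedDeriv_one, hfun, hs.deriv]
    push_cast
    simp only [Polynomial.eval_C]
    ring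
  | succ n hn IH =>
    obtain ⟨P, hdeg, hP⟩ := IH
    set Q : Polynomial ℝ :=
      Polynomial.X * (1 - Polynomial.X ^ 2) * Polynomial.derivative P +
        Polynomial.C ((1:ℝ)/2 - (n:ℝ)) * ((1 - Polynomial.X ^ 2) * P) -
        Polynomial.C 2 * (Polynomial.X ^ 2 * P) with hQ
    have hdegQ : Q.natDegree ≤ 2 * (n + 1) - 2 := by
      have h1x : (1 - Polynomial.X ^ 2 : Polynomial ℝ).natDegree ≤ 2 := by
        apply le_trans (Polynomial.natDegree_sub_le _ _)
        simp
      have hterm1 : (Polynomial.X * (1 - Polynomial.X ^ 2) *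
          Polynomial.derivative P).natDegree ≤ 2 * n := by
        rcases Nat.eq_zero_or_pos P.natDegree with h0 | hpos
        · obtain ⟨c, rfl⟩ := Polynomial.natDegree_eq_zero.mp h0
          simp
        · apply le_trans (Polynomial.natDegree_mul_le)
          have := Polynomial.natDegree_derivative_le P
          have h2 : (Polynomial.X * (1 - Polynomial.X ^ 2) : Polynomial ℝ).natDegree ≤ 3 := by
            apply le_trans (Polynomial.natDegree_mul_le)
            have hx1 : (Polynomial.X : Polynomial ℝ).natDegree = 1 := Polynomial.natDegree_X
            omega
          omega
      have hterm2 : (Polynomial.C ((1:ℝ)/2 - (n:ℝ)) *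
          ((1 - Polynomial.X ^ 2) * P)).natDegree ≤ 2 * n := by
        apply le_trans (Polynomial.natDegree_mul_le)
        have : ((1 - Polynomial.X ^ 2) * P : Polynomial ℝ).natDegree ≤ 2 + P.natDegree :=
          le_trans (Polynomial.natDegree_mul_le) (by omega)
        simp only [Polynomial.natDegree_C, zero_add]
        omega
      have hterm3 : (Polynomial.C (2:ℝ) * (Polynomial.X ^ 2 * P)).natDegree ≤ 2 * n := by
        apply le_trans (Polynomial.natDegree_mul_le)
        have : (Polynomial.X ^ 2 * P : Polynomial ℝ).natDegree ≤ 2 + P.natDegree :=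
          le_trans (Polynomial.natDegree_mul_le) (by simp)
        simp only [Polynomial.natDegree_C, zero_add]
        omega
      rw [hQ]
      apply le_trans (Polynomial.natDegree_sub_le _ _)
      have := Polynomial.natDegree_add_le (Polynomial.X * (1 - Polynomial.X ^ 2) *
          Polynomial.derivative P) (Polynomial.C ((1:ℝ)/2 - (n:ℝ)) * ((1 - Polynomial.X ^ 2) * P))
      omega
    refine ⟨Q, hdegQ, ?_⟩
    intro a ha x hx
    set t := Real.tanh (x * a) with htdef
    have ht0 : 0 < t := tanh_pos (mul_pos hx ha)
    set κ : ℝ := (1:ℝ)/2 - (n:ℝ) with hκ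
    have hta : HasDerivAt (fun y : ℝ => Real.tanh (y * a)) ((1 - t ^ 2) * a) x :=
      by have := (_root_.hasDerivAt_tanh (x * a)).comp x (hasDerivAt_mul_const a); exact this
    have h1 : HasDerivAt (fun y : ℝ => Polynomial.eval (Real.tanh (y * a)) P)
        (Polynomial.eval t (Polynomial.derivative P) * ((1 - t ^ 2) * a)) x :=
      by have := (P.hasDerivAt t).comp x hta; exact this
    have h2 : HasDerivAt (fun y : ℝ => Real.tanh (y * a) ^ κ)
        ((1 - t ^ 2) * a * κ * t ^ (κ - 1)) x :=
      hta.rpow_const (Or.inl ht0.ne')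
    have h3 : HasDerivAt (fun y : ℝ => 1 - Real.tanh (y * a) ^ 2)
        (0 - (2 : ℕ) * t ^ (2 - 1) * ((1 - t ^ 2) * a)) x :=
      (hasDerivAt_const x (1:ℝ)).sub (hta.pow 2)
    have hg : HasDerivAt (fun y : ℝ => a ^ n * (Polynomial.eval (Real.tanh (y * a)) P *
          Real.tanh (y * a) ^ κ * (1 - Real.tanh (y * a) ^ 2)))
        (a ^ n * ((Polynomial.eval t (Polynomial.derivative P) * ((1 - t ^ 2) * a) * t ^ κ +
          Polynomial.eval t P * ((1 - t ^ 2) * a * κ * t ^ (κ - 1))) * (1 - t ^ 2) +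
          Polynomial.eval t P * t ^ κ * (0 - (2 : ℕ) * t ^ (2 - 1) * ((1 - t ^ 2) * a)))) x :=
      (((h1.mul h2).mul h3)).const_mul (a ^ n)
    have heq : iteratedDeriv (n + 1) (fun s : ℝ => Real.sqrt (Real.tanh (s * a))) x =
        deriv (fun y : ℝ => a ^ n * (Polynomial.eval (Real.tanh (y * a)) P *
          Real.tanh (y * a) ^ κ * (1 - Real.tanh (y * a) ^ 2))) x := by
      rw [iteratedDeriv_succ]
      apply Filter.EventuallyEq.deriv_eq
      filter_upwards [eventually_gt_nhds hx] with y hy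
      exact hP a ha y hy
    rw [heq, hg.deriv]
    -- algebra
    have htκ : t ^ κ = t * t ^ (κ - 1) := by
      nth_rewrite 1 [show κ = 1 + (κ - 1) by ring]
      rw [Real.rpow_add ht0, Real.rpow_one]
    have hexp : (1:ℝ)/2 - ((n:ℕ) + 1 : ℕ) = κ - 1 := by push_cast [hκ]; ring
    rw [hexp]
    simp only [hQ, Polynomial.eval_sub, Polynomial.eval_add, Polynomial.eval_mul,
      Polynomial.eval_C, Polynomial.eval_X, Polynomial.eval_pow, Polynomial.eval_one,
      Polynomial.eval_sub]
    rw [htκ]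
    push_cast
    ring

lemma decay_bound (n : ℕ) (c a : ℝ) (hc : 0 < c) (ha : 0 ≤ a) :
    a ^ n * Real.exp (-(c * a)) ≤ (n.factorial : ℝ) / c ^ n := by
  have h := Real.pow_div_factorial_le_exp (x := c * a) (mul_nonneg hc.le ha) n
  rw [div_le_iff₀ (by positivity : (0:ℝ) < (n.factorial : ℝ))] at h
  rw [le_div_iff₀ (pow_pos hc n), Real.exp_neg]
  have hepos := Real.exp_pos (c * a)
  calc a ^ n * (Real.exp (c * a))⁻¹ * c ^ n
      = (c * a) ^ n * (Real.exp (c * a))⁻¹ := by rw [mul_pow]; ring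
    _ ≤ (Real.exp (c * a) * (n.factorial : ℝ)) * (Real.exp (c * a))⁻¹ := by
        apply mul_le_mul_of_nonneg_right h (by positivity)
    _ = (n.factorial : ℝ) := by field_simp

lemma iteratedDeriv_zero_fun (n : ℕ) : iteratedDeriv n (fun _ : ℝ => (0:ℝ)) = fun _ => 0 := by
  induction n with
  | zero => rfl
  | succ n ih => rw [iteratedDeriv_succ, ih]; funext x; simp

/-- (a) For n ≥ 1 the n-th derivative of x ↦ √(tanh x) on (0,∞) equals
P_n(tanh x)·(tanh x)^{1/2−n}·(1−tanh²x) for a polynomial P_n of degree ≤ 2n−2.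
(b) For every n ∈ ℕ and h₁ > 0 there is C = C(n,h₁) such that for all h ≥ h₁ and all
integers j, |∂_h^n (tanh(h|j|))^{1/2}| ≤ C. -/
theorem sqrt_tanh_derivatives :
    (∀ n : ℕ, 1 ≤ n → ∃ P : Polynomial ℝ, P.natDegree ≤ 2 * n - 2 ∧
      ∀ x : ℝ, 0 < x →
        iteratedDeriv n (fun t : ℝ => Real.sqrt (Real.tanh t)) x =
          P.eval (Real.tanh x) * Real.tanh x ^ ((1 : ℝ) / 2 - (n : ℝ)) *
            (1 - Real.tanh x ^ 2)) ∧
    (∀ (n : ℕ) (h₁ : ℝ), 0 < h₁ → ∃ C : ℝ, 0 < C ∧ ∀ h : ℝ, h₁ ≤ h → ∀ j : ℤ,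
        |iteratedDeriv n (fun t : ℝ => Real.sqrt (Real.tanh (t * |(j : ℝ)|))) h| ≤ C) := by
  constructor
  · intro n hn
    obtain ⟨P, hdeg, hP⟩ := sqrt_tanh_key n hn
    refine ⟨P, hdeg, ?_⟩
    intro x hx
    have := hP 1 one_pos x hx
    simpa only [mul_one, one_pow, one_mul] using this
  · intro n h₁ hh₁
    rcases Nat.eq_zero_or_pos n with rfl | hn
    · refine ⟨1, one_pos, ?_⟩
      intro h hh j
      rw [iteratedDeriv_zero, abs_of_nonneg (Real.sqrt_nonneg _)]
      exact Real.sqrt_le_one.mpr (_root_.tanh_lt_one _).le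
    · obtain ⟨P, hdeg, hP⟩ := sqrt_tanh_key n hn
      obtain ⟨M, hM⟩ := (isCompact_Icc (a := (0:ℝ)) (b := 1)).exists_bound_of_continuousOn
        (P.continuous).continuousOn
      have hM0 : 0 ≤ M := le_trans (norm_nonneg _) (hM 0 ⟨le_refl 0, zero_le_one⟩)
      have ht₁ : 0 < Real.tanh h₁ := tanh_pos hh₁
      set κ : ℝ := (1:ℝ)/2 - (n:ℝ) with hκdef
      have hκ : κ ≤ 0 := by
        have : (1:ℝ) ≤ (n:ℝ) := by exact_mod_cast hn
        rw [hκdef]; linarith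
      set C : ℝ := (M + 1) * Real.tanh h₁ ^ κ * (4 * (n.factorial : ℝ) / (2 * h₁) ^ n)
        with hCdef
      have hC : 0 < C := by
        apply mul_pos (mul_pos (by linarith) (Real.rpow_pos_of_pos ht₁ κ))
        apply div_pos (by positivity) (by positivity)
      refine ⟨C, hC, ?_⟩
      intro h hh j
      rcases eq_or_ne j 0 with rfl | hj
      · simp only [Int.cast_zero, abs_zero, mul_zero, Real.tanh_zero, Real.sqrt_zero]
        rw [iteratedDeriv_zero_fun n]
        simpa using hC.le
      · set a : ℝ := |(j : ℝ)| with hadef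
        have ha1 : (1:ℝ) ≤ a := by
          rw [hadef, ← Int.cast_abs]
          exact_mod_cast Int.one_le_abs hj
        have ha0 : (0:ℝ) < a := lt_of_lt_of_le zero_lt_one ha1
        have hh0 : (0:ℝ) < h := lt_of_lt_of_le hh₁ hh
        rw [hP a ha0 h hh0]
        set t := Real.tanh (h * a) with htdef
        have ht0 : 0 < t := tanh_pos (by positivity)
        have ht1 : t < 1 := _root_.tanh_lt_one _
        have hmono : Real.tanh h₁ ≤ t := tanh_strictMono.monotone (by nlinarith)
        have habs : |a ^ n * (P.eval t * t ^ κ * (1 - t ^ 2))| =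
            |P.eval t| * t ^ κ * (a ^ n * (1 - t ^ 2)) := by
          rw [abs_mul, abs_mul, abs_mul, abs_of_nonneg (pow_nonneg ha0.le n),
            abs_of_nonneg (Real.rpow_nonneg ht0.le _),
            abs_of_nonneg (by nlinarith : (0:ℝ) ≤ 1 - t ^ 2)]
          ring
        rw [habs]
        have b1 : |P.eval t| ≤ M + 1 := by
          have := hM t ⟨ht0.le, ht1.le⟩
          rw [Real.norm_eq_abs] at this; linarith
        have b2 : t ^ κ ≤ Real.tanh h₁ ^ κ := Real.rpow_le_rpow_of_nonpos ht₁ hmono hκ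
        have b3 : a ^ n * (1 - t ^ 2) ≤ 4 * (n.factorial : ℝ) / (2 * h₁) ^ n := by
          have d1 : 1 - t ^ 2 ≤ 4 * Real.exp (-(2 * (h * a))) := one_sub_tanh_sq_le (h * a)
          have d2 : Real.exp (-(2 * (h * a))) ≤ Real.exp (-(2 * h₁ * a)) := by
            apply Real.exp_le_exp.mpr; nlinarith
          have d3 : a ^ n * Real.exp (-(2 * h₁ * a)) ≤ (n.factorial : ℝ) / (2 * h₁) ^ n :=
            decay_bound n (2 * h₁) a (by linarith) ha0.le
          calc a ^ n * (1 - t ^ 2)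
              ≤ a ^ n * (4 * Real.exp (-(2 * h₁ * a))) := by
                apply mul_le_mul_of_nonneg_left _ (pow_nonneg ha0.le n)
                linarith
            _ = 4 * (a ^ n * Real.exp (-(2 * h₁ * a))) := by ring
            _ ≤ 4 * ((n.factorial : ℝ) / (2 * h₁) ^ n) := by linarith
            _ = 4 * (n.factorial : ℝ) / (2 * h₁) ^ n := by ring
        rw [hCdef]
        have hnn1 : (0:ℝ) ≤ t ^ κ := Real.rpow_nonneg ht0.le _
        have hnn2 : (0:ℝ) ≤ a ^ n * (1 - t ^ 2) := by
          apply mul_nonneg (pow_nonneg ha0.le n); nlinarith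
        calc |P.eval t| * t ^ κ * (a ^ n * (1 - t ^ 2))
            ≤ (M + 1) * Real.tanh h₁ ^ κ * (a ^ n * (1 - t ^ 2)) := by
              apply mul_le_mul_of_nonneg_right _ hnn2
              apply mul_le_mul b1 b2 hnn1 (by linarith)
          _ ≤ (M + 1) * Real.tanh h₁ ^ κ * (4 * (n.factorial : ℝ) / (2 * h₁) ^ n) := by
              apply mul_le_mul_of_nonneg_left b3
              exact mul_nonneg (by linarith) (Real.rpow_nonneg ht₁.le _)
end

section
/- (Regularized inverse with derivative bounds.) Let n ≥ 1, k ∈ ℕ, γ ∈ (0,1], ρ > 0 and M ≥ ρ. Let χ : ℝ → [0,1] be a cut-off function (C^∞, even, χ(y) = 0 for |y| ≤ 1/3, χ(y) = 1 for |y| ≥ 2/3). Define h_ρ : ℝ → ℝ by h_ρ(y) := χ(y/ρ)/y for y ≠ 0 and h_ρ(0) := 0. Then: (i) h_ρ is C^∞ on ℝ, h_ρ(y) = 1/y for all |y| ≥ 2ρ/3, and |h_ρ(y)| ≤ 3/ρ for all y ∈ ℝ. (ii) If f : ℝ^n → ℝ is of class C^{k+1} and satisfies γ^{|α|}·|∂^α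 f(λ)| ≤ M for all λ ∈ ℝ^n and all multi-indices α with 1 ≤ |α| ≤ k+1, then g := h_ρ ∘ f is of class C^{k+1}, g(λ) = 1/f(λ) for every λ with |f(λ)| ≥ ρ, and there exists a constant C_k > 0, depending only on k, n and χ, such that γ^{|α|}·|∂^α g(λ)| ≤ C_k · M^{k+1}/ρ^{k+2} for all λ ∈ ℝ^n and all multi-indices α with 0 ≤ |α| ≤ k+1. -/
/-- A cut-off function: C^∞, even, valued in [0,1], vanishing for |y| ≤ 1/3 and
equal to 1 for |y| ≥ 2/3. -/
def IsCutoff (χ : ℝ → ℝ) : Prop :=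
  (∀ m : ℕ, ContDiff ℝ m χ) ∧ (∀ y : ℝ, χ (-y) = χ y) ∧
  (∀ y : ℝ, χ y ∈ Set.Icc (0 : ℝ) 1) ∧
  (∀ y : ℝ, |y| ≤ 1 / 3 → χ y = 0) ∧ (∀ y : ℝ, 2 / 3 ≤ |y| → χ y = 1)

/-- The regularized inverse h_ρ(y) = χ(y/ρ)/y, with h_ρ(0) = 0. -/
noncomputable def hcut (χ : ℝ → ℝ) (ρ : ℝ) (y : ℝ) : ℝ :=
  if y = 0 then 0 else χ (y / ρ) / y

/-- Partial derivative in the i-th coordinate direction of a function on ℝ^n. -/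
noncomputable def pderiv' {n : ℕ} (i : Fin n) (f : (Fin n → ℝ) → ℝ) : (Fin n → ℝ) → ℝ :=
  fun x => fderiv ℝ f x (Pi.single i 1)

/-- Multi-index partial derivative ∂^α on ℝ^n. -/
noncomputable def multiDeriv {n : ℕ} (α : Fin n → ℕ) (f : (Fin n → ℝ) → ℝ) :
    (Fin n → ℝ) → ℝ :=
  (List.finRange n).foldr (fun i g => (pderiv' i)^[α i] g) f

noncomputable def dList {n : ℕ} (L : List (Fin n)) (g : (Fin n → ℝ) → ℝ) : (Fin n → ℝ) → ℝ :=
  L.foldr (fun i h => pderiv' i h) g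




open Filter

variable {χ : ℝ → ℝ}

lemma hcut_eq (ρ : ℝ) : hcut χ ρ = fun y => χ (y / ρ) * y⁻¹ := by
  funext y
  by_cases hy : y = 0
  · subst hy; simp [hcut]
  · simp [hcut, hy, div_eq_mul_inv]

lemma hcut_contDiff (hχ : IsCutoff χ) {ρ : ℝ} (hρ : 0 < ρ) (m : ℕ) :
    ContDiff ℝ m (hcut χ ρ) := by
  rw [hcut_eq]
  rw [contDiff_iff_contDiffAt]
  intro x
  by_cases hx : x = 0
  · subst hx
    have h : (fun y : ℝ => χ (y / ρ) * y⁻¹) =ᶠ[nhds 0] (fun _ => 0) := by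
      filter_upwards [Metric.ball_mem_nhds 0 (by positivity : (0:ℝ) < ρ/3)] with y hy
      have hy' : |y| < ρ / 3 := by
        rw [Metric.mem_ball, Real.dist_eq, sub_zero] at hy; exact hy
      have : |y / ρ| ≤ 1/3 := by
        rw [abs_div, abs_of_pos hρ, div_le_div_iff₀ hρ (by norm_num)]
        nlinarith [abs_nonneg y]
      rw [hχ.2.2.2.1 _ this, zero_mul]
    exact (contDiffAt_const (c := (0:ℝ))).congr_of_eventuallyEq h
  · exact (((hχ.1 m).comp (contDiff_id.div_const ρ)).contDiffAt).mul (contDiffAt_inv ℝ hx)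

lemma hcut_eq_inv (hχ : IsCutoff χ) {ρ : ℝ} (hρ : 0 < ρ) {y : ℝ} (hy : 2 * ρ / 3 ≤ |y|) :
    hcut χ ρ y = 1 / y := by
  have hy0 : y ≠ 0 := by
    intro h; rw [h] at hy; simp at hy; nlinarith
  have : (2:ℝ)/3 ≤ |y / ρ| := by
    rw [abs_div, abs_of_pos hρ, le_div_iff₀ hρ]; linarith
  rw [hcut, if_neg hy0, hχ.2.2.2.2 _ this]

lemma hcut_abs_le (hχ : IsCutoff χ) {ρ : ℝ} (hρ : 0 < ρ) (y : ℝ) :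
    |hcut χ ρ y| ≤ 3 / ρ := by
  by_cases hy : y = 0
  · rw [hy]; simp [hcut]; positivity
  rw [hcut, if_neg hy]
  by_cases h3 : |y| ≤ ρ / 3
  · have : |y / ρ| ≤ 1/3 := by
      rw [abs_div, abs_of_pos hρ, div_le_div_iff₀ hρ (by norm_num)]; nlinarith
    rw [hχ.2.2.2.1 _ this]; simp; positivity
  · push_neg at h3
    rw [abs_div]
    have h1 : |χ (y / ρ)| ≤ 1 := by
      have := hχ.2.2.1 (y / ρ); rw [abs_le]; constructor <;> [linarith [this.1]; linarith [this.2]]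
    calc |χ (y / ρ)| / |y| ≤ 1 / |y| := by
          gcongr
      _ ≤ 3 / ρ := by
          rw [div_le_div_iff₀ (abs_pos.mpr hy) hρ]; nlinarith [abs_nonneg y]




lemma dList_cons {n : ℕ} (i : Fin n) (L : List (Fin n)) (g : (Fin n → ℝ) → ℝ) :
    dList (i :: L) g = pderiv' i (dList L g) := rfl

lemma pderiv'_swap {n : ℕ} (i j : Fin n) {g : (Fin n → ℝ) → ℝ} (hg : ContDiff ℝ 2 g)
    (x : Fin n → ℝ) : pderiv' i (pderiv' j g) x = pderiv' j (pderiv' i g) x := by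
  have hdiff : Differentiable ℝ (fderiv ℝ g) :=
    (hg.fderiv_right (by norm_num : (1:WithTop ℕ∞) + 1 ≤ 2)).differentiable one_ne_zero
  have key : ∀ a b : Fin n, pderiv' a (pderiv' b g) x
      = fderiv ℝ (fderiv ℝ g) x (Pi.single a 1) (Pi.single b 1) := by
    intro a b
    have h1 : pderiv' b g = fun y => (fderiv ℝ g y) (Pi.single b 1) := rfl
    have h2 : fderiv ℝ (fun y => (fderiv ℝ g y) (Pi.single b 1)) x
        = (fderiv ℝ g x).comp (fderiv ℝ (fun _ => Pi.single b 1) x)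
          + (fderiv ℝ (fderiv ℝ g) x).flip (Pi.single b 1) :=
      fderiv_clm_apply (hdiff x) (differentiableAt_const _)
    show fderiv ℝ (pderiv' b g) x (Pi.single a 1) = _
    rw [h1, h2]
    simp [fderiv_const]
  rw [key i j, key j i]
  exact (hg.contDiffAt.isSymmSndFDerivAt (by simp [minSmoothness_of_isRCLikeNormedField])).eq _ _

lemma pderiv'_contDiff' {n m : ℕ} (i : Fin n) {g : (Fin n → ℝ) → ℝ}
    (hg : ContDiff ℝ (m + 1) g) : ContDiff ℝ m (pderiv' i g) := by
  have h : pderiv' i g = fun x => (fderiv ℝ g x) (Pi.single i 1) := rfl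
  rw [h]
  exact (hg.fderiv_right (by exact_mod_cast le_rfl)).clm_apply contDiff_const

lemma dList_contDiff {n : ℕ} : ∀ (L : List (Fin n)) (m : ℕ) (g : (Fin n → ℝ) → ℝ),
    ContDiff ℝ (m + L.length) g → ContDiff ℝ m (dList L g)
  | [], m, g, hg => by simpa [dList] using hg
  | (i :: L), m, g, hg => by
    have h : ContDiff ℝ (m + 1) (dList L g) := by
      apply dList_contDiff L (m+1) g
      have e : ((m+1 : ℕ) + (L.length : ℕ) : WithTop ℕ∞) = (m : ℕ) + ((i :: L).length : ℕ) := by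
        push_cast [List.length_cons]; ring
      rw [e]; exact hg
    exact pderiv'_contDiff' i h

lemma dList_perm {n : ℕ} {L₁ L₂ : List (Fin n)} (hp : L₁.Perm L₂) :
    ∀ (g : (Fin n → ℝ) → ℝ), ContDiff ℝ L₁.length g → dList L₁ g = dList L₂ g := by
  induction hp with
  | nil => intro g hg; rfl
  | cons a h ih =>
    intro g hg
    rw [dList_cons, dList_cons, ih g (hg.of_le (by exact_mod_cast Nat.le_succ _))]
  | swap a b l =>
    intro g hg
    have h2 : ContDiff ℝ 2 (dList l g) := by
      apply dList_contDiff l 2 g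
      have e : ((2:ℕ) + (l.length : ℕ) : WithTop ℕ∞) = ((b :: a :: l).length : ℕ) := by
        push_cast [List.length_cons]; ring
      rw [e]; exact_mod_cast hg
    funext x
    exact pderiv'_swap b a h2 x
  | trans h₁ h₂ ih₁ ih₂ =>
    intro g hg
    rw [ih₁ g hg, ih₂ g (by rw [← h₁.length_eq]; exact hg)]







lemma dOfFn_eq {n : ℕ} : ∀ (j : ℕ) (p : Fin j → Fin n) (g : (Fin n → ℝ) → ℝ),
    ContDiff ℝ j g → ∀ x, dList (List.ofFn p) g x
      = iteratedFDeriv ℝ j g x (fun t => Pi.single (p t) 1)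
  | 0, p, g, hg, x => by simp [dList, List.ofFn_zero, iteratedFDeriv_zero_apply]
  | (j+1), p, g, hg, x => by
    have IH := dOfFn_eq j (fun t => p t.succ) g (hg.of_le (by exact_mod_cast Nat.le_succ j))
    have hL : dList (List.ofFn p) g x
        = pderiv' (p 0) (dList (List.ofFn fun t => p t.succ) g) x := by
      rw [List.ofFn_succ]; rfl
    rw [hL]
    have hdiff : Differentiable ℝ (iteratedFDeriv ℝ j g) :=
      hg.differentiable_iteratedFDeriv (by exact_mod_cast Nat.lt_succ_self j)
    set v : Fin j → (Fin n → ℝ) := fun t => Pi.single (p t.succ) 1 with hv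
    set A := ContinuousMultilinearMap.apply ℝ (fun _ : Fin j => (Fin n → ℝ)) ℝ v with hA
    have hfun : dList (List.ofFn fun t => p t.succ) g
        = fun y => A (iteratedFDeriv ℝ j g y) := by
      funext y; exact IH y
    have hfd : fderiv ℝ (fun y => A (iteratedFDeriv ℝ j g y)) x
        = A.comp (fderiv ℝ (iteratedFDeriv ℝ j g) x) :=
      (A.hasFDerivAt.comp x (hdiff x).hasFDerivAt).fderiv
    show fderiv ℝ (dList (List.ofFn fun t => p t.succ) g) x (Pi.single (p 0) 1) = _
    rw [hfun, hfd]
    rw [iteratedFDeriv_succ_apply_left]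
    rfl





def flatα {n : ℕ} (α : Fin n → ℕ) : List (Fin n) :=
  (List.finRange n).flatMap (fun i => List.replicate (α i) i)

lemma iter_pderiv_eq_dList {n : ℕ} (i : Fin n) (m : ℕ) (h : (Fin n → ℝ) → ℝ) :
    (pderiv' i)^[m] h = dList (List.replicate m i) h := by
  induction m with
  | zero => rfl
  | succ m ih => rw [Function.iterate_succ_apply', ih, List.replicate_succ]; rfl

lemma dList_append {n : ℕ} (L₁ L₂ : List (Fin n)) (g : (Fin n → ℝ) → ℝ) :
    dList (L₁ ++ L₂) g = dList L₁ (dList L₂ g) := by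
  simp [dList, List.foldr_append]

lemma multiDeriv_eq_dList {n : ℕ} (α : Fin n → ℕ) (f : (Fin n → ℝ) → ℝ) :
    multiDeriv α f = dList (flatα α) f := by
  show (List.finRange n).foldr _ f = _
  rw [flatα]
  induction (List.finRange n) with
  | nil => rfl
  | cons i l ih =>
    rw [List.foldr_cons, ih, List.flatMap_cons, dList_append, iter_pderiv_eq_dList]

lemma length_flatα {n : ℕ} (α : Fin n → ℕ) : (flatα α).length = ∑ i, α i := by
  rw [flatα, List.length_flatMap, Fin.sum_univ_def]
  simp [Function.comp_def]

lemma count_flatα {n : ℕ} (α : Fin n → ℕ) (a : Fin n) : (flatα α).count a = α a := by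
  rw [flatα, List.count_flatMap, ← Fin.sum_univ_def]
  have h : ∀ i : Fin n, List.count a (List.replicate (α i) i) = if i = a then α i else 0 := by
    intro i
    simp [List.count_replicate]
  simp only [Function.comp_def, h]
  simp

lemma count_ofFn {n : ℕ} : ∀ (j : ℕ) (p : Fin j → Fin n) (a : Fin n),
    (List.ofFn p).count a = (Finset.univ.filter fun t => p t = a).card
  | 0, p, a => by simp
  | (j+1), p, a => by
    rw [List.ofFn_succ, List.count_cons, count_ofFn j (fun t => p t.succ) a,
      Finset.card_filter, Finset.card_filter, Fin.sum_univ_succ]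
    simp only [beq_iff_eq]
    omega

lemma ofFn_perm_flatα {n : ℕ} (j : ℕ) (p : Fin j → Fin n) :
    (List.ofFn p).Perm (flatα (fun i => (Finset.univ.filter fun t => p t = i).card)) := by
  rw [List.perm_iff_count]
  intro a
  rw [count_flatα, count_ofFn]

lemma sum_card_fiber {n : ℕ} (j : ℕ) (p : Fin j → Fin n) :
    ∑ i, (Finset.univ.filter fun t => p t = i).card = j := by
  rw [← Finset.card_eq_sum_card_fiberwise (fun t _ => Finset.mem_univ (p t))]
  simp


lemma multilinear_norm_le {n j : ℕ}
    (m : ContinuousMultilinearMap ℝ (fun _ : Fin j => (Fin n → ℝ)) ℝ) :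
    ‖m‖ ≤ ∑ p : Fin j → Fin n, |m (fun t => Pi.single (p t) 1)| := by
  apply ContinuousMultilinearMap.opNorm_le_bound
  · positivity
  intro v
  have hv : v = fun t => ∑ i, Pi.single i (v t i) := by
    funext t s
    rw [Finset.sum_apply]
    simp [Fintype.sum_pi_single]
  conv_lhs => rw [hv]
  have hsum : m (fun t => ∑ i, Pi.single i (v t i))
      = ∑ p : Fin j → Fin n, m (fun t => Pi.single (p t) (v t (p t))) := by
    exact m.toMultilinearMap.map_sum (fun t i => Pi.single i (v t i))
  rw [hsum]
  have hterm : ∀ p : Fin j → Fin n, m (fun t => Pi.single (p t) (v t (p t)))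
      = (∏ t, v t (p t)) • m (fun t => Pi.single (p t) 1) := by
    intro p
    have : (fun t => Pi.single (p t) (v t (p t)) : Fin j → (Fin n → ℝ))
        = fun t => (v t (p t)) • (Pi.single (p t) (1:ℝ) : Fin n → ℝ) := by
      funext t
      rw [← Pi.single_smul, smul_eq_mul, mul_one]
    rw [this]
    exact m.toMultilinearMap.map_smul_univ _ _
  simp only [hterm]
  calc ‖∑ p : Fin j → Fin n, (∏ t, v t (p t)) • m (fun t => Pi.single (p t) 1)‖
      ≤ ∑ p : Fin j → Fin n, ‖(∏ t, v t (p t)) • m (fun t => Pi.single (p t) 1)‖ :=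
        norm_sum_le _ _
    _ ≤ ∑ p : Fin j → Fin n, |m (fun t => Pi.single (p t) 1)| * ∏ t, ‖v t‖ := by
        apply Finset.sum_le_sum
        intro p _
        rw [norm_smul]
        rw [mul_comm]
        apply mul_le_mul_of_nonneg_left _ (norm_nonneg _) |>.trans_eq rfl
        calc ‖∏ t, v t (p t)‖ = ∏ t, |v t (p t)| := by
              rw [Real.norm_eq_abs, Finset.abs_prod]
          _ ≤ ∏ t, ‖v t‖ := by
              apply Finset.prod_le_prod (fun _ _ => abs_nonneg _)
              intro t _
              exact (norm_le_pi_norm (v t) (p t))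
    _ = (∑ p : Fin j → Fin n, |m (fun t => Pi.single (p t) 1)|) * ∏ t, ‖v t‖ := by
        rw [← Finset.sum_mul]

lemma abs_multiDeriv_le {n : ℕ} (α : Fin n → ℕ) (g : (Fin n → ℝ) → ℝ)
    (hg : ContDiff ℝ ((∑ i, α i : ℕ)) g) (x : Fin n → ℝ) :
    |multiDeriv α g x| ≤ ‖iteratedFDeriv ℝ (∑ i, α i) g x‖ := by
  have hlen := length_flatα α
  rw [multiDeriv_eq_dList, ← List.ofFn_get (flatα α),
    dOfFn_eq (flatα α).length ((flatα α).get) g (by rw [hlen]; exact hg) x]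
  calc |iteratedFDeriv ℝ (flatα α).length g x (fun t => Pi.single ((flatα α).get t) 1)|
      ≤ ‖iteratedFDeriv ℝ (flatα α).length g x‖
        * ∏ t : Fin (flatα α).length, ‖(Pi.single ((flatα α).get t) (1:ℝ) : Fin n → ℝ)‖ := by
        exact (iteratedFDeriv ℝ (flatα α).length g x).le_opNorm _
    _ = ‖iteratedFDeriv ℝ (∑ i, α i) g x‖ := by
        have hprod : (∏ t : Fin (flatα α).length,
            ‖(Pi.single ((flatα α).get t) (1:ℝ) : Fin n → ℝ)‖) = 1 := by
          simp [Pi.norm_single]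
        rw [hprod, mul_one, hlen]

lemma abs_dOfFn_le_of_multi {n k : ℕ} {f : (Fin n → ℝ) → ℝ} (hf : ContDiff ℝ ((k:ℕ)+1) f)
    {γ M : ℝ} (hγ : 0 < γ)
    (hb : ∀ lam : Fin n → ℝ, ∀ α : Fin n → ℕ, 1 ≤ ∑ i, α i → ∑ i, α i ≤ k + 1 →
      γ ^ (∑ i, α i) * |multiDeriv α f lam| ≤ M)
    (j : ℕ) (hj1 : 1 ≤ j) (hjk : j ≤ k + 1) (p : Fin j → Fin n) (x : Fin n → ℝ) :
    |iteratedFDeriv ℝ j f x (fun t => Pi.single (p t) 1)| ≤ M / γ ^ j := by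
  have hfj : ContDiff ℝ (j:ℕ) f := hf.of_le (by exact_mod_cast hjk)
  rw [← dOfFn_eq j p f hfj x]
  set α : Fin n → ℕ := fun i => (Finset.univ.filter fun t => p t = i).card with hα
  have hsum : ∑ i, α i = j := sum_card_fiber j p
  have hperm : dList (List.ofFn p) f = multiDeriv α f := by
    rw [multiDeriv_eq_dList]
    exact dList_perm (ofFn_perm_flatα j p) f
      (by rw [List.length_ofFn]; exact hfj)
  rw [hperm]
  have h := hb x α (by omega) (by omega)
  rw [hsum] at h
  rw [le_div_iff₀ (by positivity)]
  linarith [h]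

lemma norm_iteratedFDeriv_le_of_multi {n k : ℕ} {f : (Fin n → ℝ) → ℝ}
    (hf : ContDiff ℝ ((k:ℕ)+1) f) {γ M : ℝ} (hγ : 0 < γ)
    (hb : ∀ lam : Fin n → ℝ, ∀ α : Fin n → ℕ, 1 ≤ ∑ i, α i → ∑ i, α i ≤ k + 1 →
      γ ^ (∑ i, α i) * |multiDeriv α f lam| ≤ M)
    (j : ℕ) (hj1 : 1 ≤ j) (hjk : j ≤ k + 1) (x : Fin n → ℝ) :
    ‖iteratedFDeriv ℝ j f x‖ ≤ n ^ j * (M / γ ^ j) := by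
  calc ‖iteratedFDeriv ℝ j f x‖
      ≤ ∑ p : Fin j → Fin n, |iteratedFDeriv ℝ j f x (fun t => Pi.single (p t) 1)| :=
        multilinear_norm_le _
    _ ≤ ∑ _p : Fin j → Fin n, M / γ ^ j := by
        apply Finset.sum_le_sum
        intro p _
        exact abs_dOfFn_le_of_multi hf hγ hb j hj1 hjk p x
    _ = n ^ j * (M / γ ^ j) := by
        rw [Finset.sum_const, Finset.card_univ]
        simp [Fintype.card_fun, nsmul_eq_mul]

lemma hcut_one_iter_bound (hχ : IsCutoff χ) (j : ℕ) :
    ∃ B : ℝ, 0 < B ∧ ∀ y : ℝ, ‖iteratedFDeriv ℝ j (hcut χ 1) y‖ ≤ B := by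
  have cont : Continuous (iteratedFDeriv ℝ j (hcut χ 1)) :=
    (hcut_contDiff hχ one_pos j).continuous_iteratedFDeriv le_rfl
  obtain ⟨B₁, hB₁⟩ := (isCompact_Icc (a := (-1:ℝ)) (b := 1)).exists_bound_of_continuousOn
    cont.continuousOn
  set B₂ : ℝ := |∏ i ∈ Finset.range j, (-1 - (i:ℝ))| with hB₂def
  refine ⟨max B₁ B₂ + 1, by positivity, fun y => ?_⟩
  by_cases hy : |y| ≤ 1
  · have : y ∈ Set.Icc (-1:ℝ) 1 := by
      rw [Set.mem_Icc]; constructor <;> [linarith [abs_le.mp hy |>.1]; linarith [abs_le.mp hy |>.2]]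
    have := hB₁ y this
    have hle : B₁ ≤ max B₁ B₂ := le_max_left _ _
    linarith
  · push_neg at hy
    have hmem : y ∈ {z : ℝ | 2/3 < |z|} := by simp only [Set.mem_setOf_eq]; linarith
    have hopen : IsOpen {z : ℝ | 2/3 < |z|} := isOpen_lt continuous_const continuous_abs
    have hEq : hcut χ 1 =ᶠ[nhds y] (fun z : ℝ => z⁻¹) := by
      filter_upwards [hopen.mem_nhds hmem] with z hz
      have hz' : 2/3 < |z| := hz
      have : 2 * 1 / 3 ≤ |z| := by linarith
      rw [hcut_eq_inv hχ one_pos this, one_div]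
    rw [norm_iteratedFDeriv_eq_norm_iteratedDeriv, hEq.iteratedDeriv_eq j,
      iteratedDeriv_eq_iterate]
    have : deriv^[j] (fun z : ℝ => z⁻¹) y = (∏ i ∈ Finset.range j, (-1 - (i:ℝ))) *
        y ^ (-1 - (j:ℤ)) := by
      have h := iter_deriv_zpow (-1 : ℤ) y j
      simp only [zpow_neg_one] at h
      exact_mod_cast h
    rw [this]
    have habs : ‖(∏ i ∈ Finset.range j, (-1 - (i:ℝ))) * y ^ (-1 - (j:ℤ))‖
        = B₂ * |y ^ (-1 - (j:ℤ))| := by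
      rw [Real.norm_eq_abs, abs_mul]
    rw [habs]
    have hy1 : |y ^ (-1 - (j:ℤ))| ≤ 1 := by
      have he : (-1 - (j:ℤ)) = -(((j + 1 : ℕ)) : ℤ) := by push_cast; ring
      rw [he, zpow_neg, abs_inv, zpow_natCast, abs_pow]
      have h1 : (1:ℝ) ≤ |y| ^ (j + 1) := one_le_pow₀ (le_of_lt hy)
      exact inv_le_one_of_one_le₀ h1
    have : B₂ * |y ^ (-1 - (j:ℤ))| ≤ B₂ := by
      nlinarith [abs_nonneg (∏ i ∈ Finset.range j, (-1 - (i:ℝ)))]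
    have hle : B₂ ≤ max B₁ B₂ := le_max_right _ _
    linarith

lemma hcut_scale (hχ : IsCutoff χ) {σ : ℝ} (hσ : 0 < σ) :
    hcut χ σ = fun y => σ⁻¹ * hcut χ 1 (σ⁻¹ * y) := by
  funext y
  rw [hcut_eq, hcut_eq]
  rcases eq_or_ne y 0 with h | h
  · subst h; simp
  · have hσ' : σ ≠ 0 := ne_of_gt hσ
    field_simp

lemma hcut_iter_bound (hχ : IsCutoff χ) (j : ℕ) :
    ∃ B : ℝ, 0 < B ∧ ∀ σ : ℝ, 0 < σ → ∀ y : ℝ,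
      ‖iteratedFDeriv ℝ j (hcut χ σ) y‖ ≤ B / σ ^ (j + 1) := by
  obtain ⟨B, hB0, hB⟩ := hcut_one_iter_bound hχ j
  refine ⟨B, hB0, fun σ hσ y => ?_⟩
  have hσ' : σ ≠ 0 := ne_of_gt hσ
  have hlin : ContDiff ℝ (j:ℕ) (fun z : ℝ => σ⁻¹ * z) := contDiff_const.mul contDiff_id
  have hcd : ContDiff ℝ (j:ℕ) (fun z : ℝ => hcut χ 1 (σ⁻¹ * z)) :=
    (hcut_contDiff hχ one_pos j).comp hlin
  have h1 : hcut χ σ = σ⁻¹ • (fun z : ℝ => hcut χ 1 (σ⁻¹ * z)) := by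
    rw [hcut_scale hχ hσ]; funext z; simp [smul_eq_mul]
  rw [h1]
  rw [iteratedFDeriv_const_smul_apply hcd.contDiffAt]
  refine le_trans (le_of_eq (norm_smul σ⁻¹ (iteratedFDeriv ℝ j
    (fun z : ℝ => hcut χ 1 (σ⁻¹ * z)) y))) ?_
  have h2 : ‖iteratedFDeriv ℝ j (fun z : ℝ => hcut χ 1 (σ⁻¹ * z)) y‖
      = ‖(σ⁻¹) ^ j * iteratedDeriv j (hcut χ 1) (σ⁻¹ * y)‖ := by
    rw [norm_iteratedFDeriv_eq_norm_iteratedDeriv]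
    rw [iteratedDeriv_comp_const_mul (hcut_contDiff hχ one_pos j) σ⁻¹]
  rw [h2]
  have h3 : ‖iteratedDeriv j (hcut χ 1) (σ⁻¹ * y)‖ ≤ B := by
    rw [← norm_iteratedFDeriv_eq_norm_iteratedDeriv]
    exact hB _
  rw [norm_mul]
  have h4 : ‖(σ⁻¹:ℝ)‖ = σ⁻¹ := by rw [Real.norm_eq_abs, abs_of_pos (by positivity)]
  have h5 : ‖(σ⁻¹:ℝ) ^ j‖ = σ⁻¹ ^ j := by
    rw [Real.norm_eq_abs, abs_pow, abs_of_pos (by positivity)]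
  rw [h4, h5]
  calc σ⁻¹ * (σ⁻¹ ^ j * ‖iteratedDeriv j (hcut χ 1) (σ⁻¹ * y)‖) ≤ σ⁻¹ * (σ⁻¹ ^ j * B) := by
        have hp : (0:ℝ) ≤ σ⁻¹ := by positivity
        have hpj : (0:ℝ) ≤ σ⁻¹ ^ j := by positivity
        exact mul_le_mul_of_nonneg_left (mul_le_mul_of_nonneg_left h3 hpj) hp
    _ = B / σ ^ (j+1) := by
        rw [div_eq_mul_inv, ← inv_pow, pow_succ]
        ring

lemma hcut_rescale (hχ : IsCutoff χ) {ρ M : ℝ} (hρ : 0 < ρ) (hM : 0 < M) (y : ℝ) :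
    M⁻¹ * hcut χ (ρ / M) (M⁻¹ * y) = hcut χ ρ y := by
  rw [hcut_eq, hcut_eq]
  rcases eq_or_ne y 0 with h | h
  · subst h; simp
  · have hM' : M ≠ 0 := ne_of_gt hM
    have hρ' : ρ ≠ 0 := ne_of_gt hρ
    field_simp

/-- Regularized inverse with derivative bounds: (i) h_ρ is C^∞, equals 1/y for
|y| ≥ 2ρ/3, and |h_ρ| ≤ 3/ρ; (ii) if f ∈ C^{k+1}(ℝ^n) satisfies γ^{|α|}|∂^α f| ≤ M for
1 ≤ |α| ≤ k+1, then g = h_ρ ∘ f is C^{k+1}, equals 1/f where |f| ≥ ρ, and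
γ^{|α|}|∂^α g| ≤ C_k M^{k+1}/ρ^{k+2} for |α| ≤ k+1, with C_k depending only on k, n, χ. -/
theorem regularized_inverse (n k : ℕ) (hn : 1 ≤ n) (χ : ℝ → ℝ) (hχ : IsCutoff χ) :
    (∀ ρ : ℝ, 0 < ρ →
      (∀ m : ℕ, ContDiff ℝ m (hcut χ ρ)) ∧
      (∀ y : ℝ, 2 * ρ / 3 ≤ |y| → hcut χ ρ y = 1 / y) ∧
      (∀ y : ℝ, |hcut χ ρ y| ≤ 3 / ρ)) ∧
    ∃ C : ℝ, 0 < C ∧ ∀ γ ρ M : ℝ, 0 < γ → γ ≤ 1 → 0 < ρ → ρ ≤ M →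
      ∀ f : (Fin n → ℝ) → ℝ, ContDiff ℝ (k + 1) f →
        (∀ lam : Fin n → ℝ, ∀ α : Fin n → ℕ, 1 ≤ ∑ i, α i → ∑ i, α i ≤ k + 1 →
          γ ^ (∑ i, α i) * |multiDeriv α f lam| ≤ M) →
        (∀ lam : Fin n → ℝ, ρ ≤ |f lam| → hcut χ ρ (f lam) = 1 / f lam) ∧
        ContDiff ℝ (k + 1) (fun lam => hcut χ ρ (f lam)) ∧
        (∀ lam : Fin n → ℝ, ∀ α : Fin n → ℕ, ∑ i, α i ≤ k + 1 →
          γ ^ (∑ i, α i) * |multiDeriv α (fun x => hcut χ ρ (f x)) lam| ≤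
            C * M ^ (k + 1) / ρ ^ (k + 2)) := by
  constructor
  · intro ρ hρ
    exact ⟨hcut_contDiff hχ hρ, fun y hy => hcut_eq_inv hχ hρ hy,
      fun y => hcut_abs_le hχ hρ y⟩
  · choose B hB0 hB using hcut_iter_bound hχ
    set Bm : ℝ := ∑ j ∈ Finset.range (k+2), B j with hBmdef
    have hBmpos : 0 < Bm :=
      Finset.sum_pos (fun j _ => hB0 j) ⟨0, Finset.mem_range.mpr (by omega)⟩
    have hBj : ∀ j, j ≤ k+1 → B j ≤ Bm := fun j hj =>
      Finset.single_le_sum (fun i _ => (hB0 i).le) (Finset.mem_range.mpr (by omega))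
    refine ⟨(Nat.factorial (k+1) : ℝ) * Bm * (n:ℝ)^(k+1), by positivity, ?_⟩
    intro γ ρ M hγ hγ1 hρ hρM f hf hb
    have hM : 0 < M := lt_of_lt_of_le hρ hρM
    have hM' : M ≠ 0 := ne_of_gt hM
    have hρ' : ρ ≠ 0 := ne_of_gt hρ
    set σ : ℝ := ρ / M with hσdef
    have hσpos : 0 < σ := by positivity
    set φ : ℝ → ℝ := fun y => M⁻¹ * hcut χ σ y with hφdef
    set f₁ : (Fin n → ℝ) → ℝ := fun x => M⁻¹ * f x with hf₁def
    have hcomp : (fun lam : Fin n → ℝ => hcut χ ρ (f lam)) = φ ∘ f₁ := by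
      funext x
      show hcut χ ρ (f x) = M⁻¹ * hcut χ (ρ / M) (M⁻¹ * f x)
      rw [hcut_rescale hχ hρ hM]
    have hcast : ((k:WithTop ℕ∞) + 1) = ((k+1:ℕ) : WithTop ℕ∞) := by push_cast; ring
    have hf' : ContDiff ℝ ((k+1:ℕ)) f := by rw [← hcast]; exact hf
    have hφCD : ∀ m : ℕ, ContDiff ℝ (m:ℕ) φ := fun m =>
      contDiff_const.mul (hcut_contDiff hχ hσpos m)
    have hf₁CD : ContDiff ℝ ((k+1:ℕ)) f₁ := contDiff_const.mul hf'
    have hgCD2 : ContDiff ℝ ((k+1:ℕ)) (φ ∘ f₁) := (hφCD (k+1)).comp hf₁CD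
    have hgCD : ContDiff ℝ ((k+1:ℕ)) (fun lam : Fin n → ℝ => hcut χ ρ (f lam)) := by
      rw [hcomp]; exact hgCD2
    refine ⟨fun lam hlam => hcut_eq_inv hχ hρ (by linarith), by rw [hcast]; exact hgCD, ?_⟩
    intro lam α hik
    set i : ℕ := ∑ t, α t with hidef
    set P : ℝ := M / ρ with hPdef
    have hP1 : 1 ≤ P := (one_le_div hρ).mpr hρM
    have hPpos : 0 < P := by positivity
    -- bound on derivatives of φ
    have hC : ∀ j, j ≤ i → ∀ z : ℝ, ‖iteratedFDeriv ℝ j φ z‖ ≤ Bm * (P ^ i / ρ) := by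
      intro j hj z
      have hji : j ≤ k + 1 := le_trans hj hik
      have h1 : φ = M⁻¹ • hcut χ σ := by funext y; simp [hφdef, smul_eq_mul]
      rw [h1, iteratedFDeriv_const_smul_apply (hcut_contDiff hχ hσpos j).contDiffAt]
      refine le_trans (le_of_eq (norm_smul (M⁻¹) (iteratedFDeriv ℝ j (hcut χ σ) z))) ?_
      have h2 : ‖(M⁻¹:ℝ)‖ = M⁻¹ := by rw [Real.norm_eq_abs, abs_of_pos (by positivity)]
      rw [h2]
      have h3 := hB j σ hσpos z
      have h4 : M⁻¹ * (B j / σ ^ (j+1)) = B j * (P ^ j / ρ) := by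
        rw [hσdef, hPdef, div_pow, div_pow]
        field_simp
        ring
      calc M⁻¹ * ‖iteratedFDeriv ℝ j (hcut χ σ) z‖ ≤ M⁻¹ * (B j / σ ^ (j+1)) := by
            exact mul_le_mul_of_nonneg_left h3 (by positivity)
        _ = B j * (P ^ j / ρ) := h4
        _ ≤ Bm * (P ^ i / ρ) := by
            have hBjm := hBj j hji
            have hPj : P ^ j ≤ P ^ i := pow_le_pow_right₀ hP1 hj
            have : P ^ j / ρ ≤ P ^ i / ρ := by gcongr
            have hnn : (0:ℝ) ≤ P ^ j / ρ := by positivity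
            nlinarith [hB0 j]
    -- bound on derivatives of f₁
    have hD : ∀ j, 1 ≤ j → j ≤ i → ‖iteratedFDeriv ℝ j f₁ lam‖ ≤ ((n:ℝ)/γ) ^ j := by
      intro j hj1 hji
      have hjk : j ≤ k + 1 := le_trans hji hik
      have h1 : f₁ = M⁻¹ • f := by funext y; simp [hf₁def, smul_eq_mul]
      rw [h1, iteratedFDeriv_const_smul_apply (hf'.of_le (by exact_mod_cast hjk : ((j:ℕ):WithTop ℕ∞) ≤ ((k+1:ℕ):WithTop ℕ∞))).contDiffAt]
      refine le_trans (le_of_eq (norm_smul (M⁻¹) (iteratedFDeriv ℝ j f lam))) ?_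
      have h2 : ‖(M⁻¹:ℝ)‖ = M⁻¹ := by rw [Real.norm_eq_abs, abs_of_pos (by positivity)]
      rw [h2]
      have h3 := norm_iteratedFDeriv_le_of_multi hf' hγ hb j hj1 hjk lam
      calc M⁻¹ * ‖iteratedFDeriv ℝ j f lam‖ ≤ M⁻¹ * ((n:ℝ) ^ j * (M / γ ^ j)) := by
            exact mul_le_mul_of_nonneg_left h3 (by positivity)
        _ = ((n:ℝ)/γ) ^ j := by
            rw [div_pow]
            field_simp
    -- compose
    have hcomple : ‖iteratedFDeriv ℝ i (φ ∘ f₁) lam‖ ≤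
        (Nat.factorial i : ℝ) * (Bm * (P ^ i / ρ)) * (((n:ℝ)/γ)) ^ i := by
      apply norm_iteratedFDeriv_comp_le (hφCD (k+1)) hf₁CD (by exact_mod_cast hik) lam
      · intro j hj; exact hC j hj (f₁ lam)
      · intro j hj1 hji; exact hD j hj1 hji
    have habs : |multiDeriv α (fun x => hcut χ ρ (f x)) lam| ≤
        ‖iteratedFDeriv ℝ i (φ ∘ f₁) lam‖ := by
      rw [hcomp]
      exact abs_multiDeriv_le α (φ ∘ f₁) (hgCD2.of_le (by exact_mod_cast hik)) lam
    have hγi : (0:ℝ) < γ ^ i := by positivity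
    have main : γ ^ i * |multiDeriv α (fun x => hcut χ ρ (f x)) lam| ≤
        γ ^ i * ((Nat.factorial i : ℝ) * (Bm * (P ^ i / ρ)) * (((n:ℝ)/γ)) ^ i) :=
      mul_le_mul_of_nonneg_left (le_trans habs hcomple) hγi.le
    have eq1 : γ ^ i * ((Nat.factorial i : ℝ) * (Bm * (P ^ i / ρ)) * (((n:ℝ)/γ)) ^ i)
        = (Nat.factorial i : ℝ) * Bm * (n:ℝ) ^ i * P ^ i / ρ := by
      have hγi' : γ ^ i * (γ ^ i)⁻¹ = 1 := mul_inv_cancel₀ hγi.ne'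
      linear_combination ((Nat.factorial i : ℝ) * Bm * (P ^ i / ρ) * (n:ℝ) ^ i) * hγi'
    have le2 : (Nat.factorial i : ℝ) * Bm * (n:ℝ) ^ i * P ^ i / ρ
        ≤ (Nat.factorial (k+1) : ℝ) * Bm * (n:ℝ) ^ (k+1) * P ^ (k+1) / ρ := by
      gcongr <;>
        first
          | exact_mod_cast Nat.factorial_le hik
          | exact_mod_cast hn
          | exact hP1
          | positivity
    have eq3 : (Nat.factorial (k+1) : ℝ) * Bm * (n:ℝ)^(k+1) * P^(k+1) / ρ
        = (Nat.factorial (k+1) : ℝ) * Bm * (n:ℝ)^(k+1) * M^(k+1) / ρ^(k+2) := by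
      rw [hPdef, div_pow]
      field_simp
      ring
    calc γ ^ i * |multiDeriv α (fun x => hcut χ ρ (f x)) lam|
        ≤ γ ^ i * ((Nat.factorial i : ℝ) * (Bm * (P ^ i / ρ)) * (((n:ℝ)/γ)) ^ i) := main
      _ = (Nat.factorial i : ℝ) * Bm * (n:ℝ) ^ i * P ^ i / ρ := eq1
      _ ≤ (Nat.factorial (k+1) : ℝ) * Bm * (n:ℝ) ^ (k+1) * P ^ (k+1) / ρ := le2
      _ = (Nat.factorial (k+1) : ℝ) * Bm * (n:ℝ)^(k+1) * M^(k+1) / ρ^(k+2) := eq3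
      _ = (Nat.factorial (k+1) : ℝ) * Bm * (n:ℝ)^(k+1) * M ^ (k + 1) / ρ ^ (k + 2) := by ring
end

section
/- (Equivalence of the quasi-periodic transport equation and the quasi-periodic characteristic equation.) Let ν ≥ 1, ω ∈ ℝ^ν, let V : ℝ^ν × ℝ → ℝ be continuous, and let β, β̆ : ℝ^ν × ℝ → ℝ be C¹ functions such that for every φ ∈ ℝ^ν the maps x ↦ x + β(φ,x) and y ↦ y + β̆(φ,y) are mutually inverse bijections of ℝ (i.e. y = x + β(φ,x) if and only if x = y + β̆(φ,y), for all x, y ∈ ℝ). Then β solves the transport equation ω·∂_φ β(φ,x) + V(φ,x)·(1 + ∂_x β(φ,x)) = 0 for all (φ,x), if and only if β̆ solves the characteristic equation ω·∂_φ β̆(φ,y) = V(φ, y + β̆(φ,y)) for all (φ,y). -/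
open ContinuousLinearMap

/-- Directional derivative as a sum over coordinates. -/
lemma aux_sum_single {ν : ℕ} (ω : Fin ν → ℝ) (L : (Fin ν → ℝ) →L[ℝ] ℝ) :
    ∑ i, ω i * L (Pi.single i 1) = L ω := by
  have h : ω = ∑ i, ω i • (Pi.single i (1:ℝ) : Fin ν → ℝ) := by
    ext j
    simp [Pi.single_apply]
  calc ∑ i, ω i * L (Pi.single i 1) = ∑ i, L (ω i • (Pi.single i (1:ℝ) : Fin ν → ℝ)) := by
        simp [map_smul, smul_eq_mul]
    _ = L (∑ i, ω i • (Pi.single i (1:ℝ) : Fin ν → ℝ)) := by rw [map_sum]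
    _ = L ω := by rw [← h]

/-- Partial derivative in the first variable as a full derivative. -/
lemma aux_partial_fst {ν : ℕ} (f : (Fin ν → ℝ) → ℝ → ℝ)
    (hf : ContDiff ℝ 1 fun p : (Fin ν → ℝ) × ℝ => f p.1 p.2)
    (φ : Fin ν → ℝ) (x : ℝ) (v : Fin ν → ℝ) :
    fderiv ℝ (fun ψ => f ψ x) φ v
      = fderiv ℝ (fun p : (Fin ν → ℝ) × ℝ => f p.1 p.2) (φ, x) (v, 0) := by
  have hfd : DifferentiableAt ℝ (fun p : (Fin ν → ℝ) × ℝ => f p.1 p.2) (φ, x) :=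
    (hf.differentiable one_ne_zero).differentiableAt
  have h1 : HasFDerivAt (fun ψ : Fin ν → ℝ => (ψ, x)) (inl ℝ (Fin ν → ℝ) ℝ) φ :=
    hasFDerivAt_prodMk_left φ x
  have h2 := (hfd.hasFDerivAt.comp φ h1).fderiv
  have : (fun ψ : Fin ν → ℝ => f ψ x)
      = (fun p : (Fin ν → ℝ) × ℝ => f p.1 p.2) ∘ (fun ψ : Fin ν → ℝ => (ψ, x)) := rfl
  rw [this, h2]
  simp

/-- Partial derivative in the second variable as a full derivative. -/
lemma aux_partial_snd {ν : ℕ} (f : (Fin ν → ℝ) → ℝ → ℝ)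
    (hf : ContDiff ℝ 1 fun p : (Fin ν → ℝ) × ℝ => f p.1 p.2)
    (φ : Fin ν → ℝ) (x : ℝ) :
    deriv (f φ) x = fderiv ℝ (fun p : (Fin ν → ℝ) × ℝ => f p.1 p.2) (φ, x) (0, 1) := by
  have hfd : DifferentiableAt ℝ (fun p : (Fin ν → ℝ) × ℝ => f p.1 p.2) (φ, x) :=
    (hf.differentiable one_ne_zero).differentiableAt
  have h1 : HasFDerivAt (fun t : ℝ => (φ, t)) (inr ℝ (Fin ν → ℝ) ℝ) x :=
    hasFDerivAt_prodMk_right φ x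
  have h2 : HasFDerivAt (f φ)
      ((fderiv ℝ (fun p : (Fin ν → ℝ) × ℝ => f p.1 p.2) (φ, x)).comp (inr ℝ (Fin ν → ℝ) ℝ)) x :=
    hfd.hasFDerivAt.comp x h1
  have h3 := h2.hasDerivAt.deriv
  rw [h3]
  simp

/-- Chain-rule identity for a pair of mutually inverse shear maps. -/
lemma aux_chain {ν : ℕ} (B C : ((Fin ν → ℝ) × ℝ) → ℝ)
    (hB : ContDiff ℝ 1 B) (hC : ContDiff ℝ 1 C)
    (hid : ∀ p : (Fin ν → ℝ) × ℝ, C (p.1, p.2 + B p) = - B p)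
    (p v : (Fin ν → ℝ) × ℝ) :
    fderiv ℝ C (p.1, p.2 + B p) (v.1, v.2 + fderiv ℝ B p v) = - fderiv ℝ B p v := by
  have hBd : DifferentiableAt ℝ B p := (hB.differentiable one_ne_zero).differentiableAt
  have hCd : DifferentiableAt ℝ C (p.1, p.2 + B p) := (hC.differentiable one_ne_zero).differentiableAt
  have hΦ : HasFDerivAt (fun q : (Fin ν → ℝ) × ℝ => (q.1, q.2 + B q))
      ((fst ℝ (Fin ν → ℝ) ℝ).prod ((snd ℝ (Fin ν → ℝ) ℝ) + fderiv ℝ B p)) p :=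
    HasFDerivAt.prodMk hasFDerivAt_fst (HasFDerivAt.add hasFDerivAt_snd hBd.hasFDerivAt)
  have hcomp := (hCd.hasFDerivAt).comp p hΦ
  have heq : (C ∘ fun q : (Fin ν → ℝ) × ℝ => (q.1, q.2 + B q)) = fun q => - B q :=
    funext fun q => hid q
  rw [heq] at hcomp
  have hneg : HasFDerivAt (fun q => - B q) (-(fderiv ℝ B p)) p := hBd.hasFDerivAt.neg
  have huniq := hcomp.unique hneg
  have := congrArg (fun L : ((Fin ν → ℝ) × ℝ) →L[ℝ] ℝ => L v) huniq
  simpa using this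

/-- Decomposition of a full derivative into its two partial parts. -/
lemma aux_decomp {ν : ℕ} (L : ((Fin ν → ℝ) × ℝ) →L[ℝ] ℝ) (v : Fin ν → ℝ) (t : ℝ) :
    L (v, t) = L (v, 0) + t * L (0, 1) := by
  have h : ((v, t) : (Fin ν → ℝ) × ℝ) = (v, 0) + t • ((0 : Fin ν → ℝ), (1:ℝ)) := by
    simp [Prod.ext_iff]
  rw [h, map_add, map_smul, smul_eq_mul]

/-- Equivalence of the quasi-periodic transport equation for β and the quasi-periodic
characteristic equation for the inverse diffeomorphism β̆: if for every φ the maps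
x ↦ x + β(φ,x) and y ↦ y + β̆(φ,y) are mutually inverse, then
ω·∂_φ β + V·(1 + ∂_x β) = 0 holds everywhere iff ω·∂_φ β̆(φ,y) = V(φ, y + β̆(φ,y))
holds everywhere. -/
theorem transport_iff_characteristic (ν : ℕ) (hν : 1 ≤ ν)
    (ω : Fin ν → ℝ) (V : (Fin ν → ℝ) → ℝ → ℝ)
    (hV : Continuous fun p : (Fin ν → ℝ) × ℝ => V p.1 p.2)
    (β βinv : (Fin ν → ℝ) → ℝ → ℝ)
    (hβ : ContDiff ℝ 1 fun p : (Fin ν → ℝ) × ℝ => β p.1 p.2)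
    (hβinv : ContDiff ℝ 1 fun p : (Fin ν → ℝ) × ℝ => βinv p.1 p.2)
    (hinv : ∀ (φ : Fin ν → ℝ) (x y : ℝ), y = x + β φ x ↔ x = y + βinv φ y) :
    (∀ (φ : Fin ν → ℝ) (x : ℝ),
        (∑ i, ω i * fderiv ℝ (fun ψ => β ψ x) φ (Pi.single i 1)) +
          V φ x * (1 + deriv (β φ) x) = 0) ↔
    (∀ (φ : Fin ν → ℝ) (y : ℝ),
        (∑ i, ω i * fderiv ℝ (fun ψ => βinv ψ y) φ (Pi.single i 1)) =
          V φ (y + βinv φ y)) := by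
  set B : ((Fin ν → ℝ) × ℝ) → ℝ := fun p => β p.1 p.2 with hBdef
  set C : ((Fin ν → ℝ) × ℝ) → ℝ := fun p => βinv p.1 p.2 with hCdef
  have hid1 : ∀ p : (Fin ν → ℝ) × ℝ, C (p.1, p.2 + B p) = - B p := by
    intro p
    have := ((hinv p.1 p.2 (p.2 + B p)).1 rfl)
    simp only [hBdef, hCdef] at this ⊢
    linarith
  have hid2 : ∀ p : (Fin ν → ℝ) × ℝ, B (p.1, p.2 + C p) = - C p := by
    intro p
    have := ((hinv p.1 (p.2 + C p) p.2).2 rfl)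
    simp only [hBdef, hCdef] at this ⊢
    linarith
  constructor
  · intro htr φ y
    set x : ℝ := y + βinv φ y with hxdef
    have hy : y = x + β φ x := (hinv φ x y).2 rfl
    have hkey1 := aux_chain B C hβ hβinv hid1 (φ, x) (ω, 0)
    have hkey2 := aux_chain B C hβ hβinv hid1 (φ, x) ((0 : Fin ν → ℝ), 1)
    simp only at hkey1 hkey2
    rw [← hy] at hkey1 hkey2
    set DB := fderiv ℝ B (φ, x)
    set DC := fderiv ℝ C (φ, y)
    set a := DB (ω, 0) with hadef
    set b := DB (0, 1) with hbdef
    set a' := DC (ω, 0) with ha'def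
    set b' := DC (0, 1) with hb'def
    have e1 : a' + a * b' = -a := by
      rw [aux_decomp DC ω (0 + a)] at hkey1
      simpa [ha'def, hb'def, hadef] using hkey1
    have e2 : (1 + b) * b' = -b := by
      rw [aux_decomp DC 0 (1 + b)] at hkey2
      have h0 : DC (0, 0) = 0 := by
        have : ((0,0) : (Fin ν → ℝ) × ℝ) = 0 := rfl
        rw [this, map_zero]
      rw [h0] at hkey2
      linarith [hkey2]
    have e3 : a + V φ x * (1 + b) = 0 := by
      have := htr φ x
      rw [aux_sum_single ω (fderiv ℝ (fun ψ => β ψ x) φ),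
        aux_partial_fst β hβ φ x ω, aux_partial_snd β hβ φ x] at this
      exact this
    have hgoal : a' = V φ x := by linear_combination e1 - (b' + 1) * e3 + V φ x * e2
    rw [aux_sum_single ω (fderiv ℝ (fun ψ => βinv ψ y) φ),
      aux_partial_fst βinv hβinv φ y ω]
    exact hgoal
  · intro hch φ x
    set y : ℝ := x + β φ x with hydef
    have hx : x = y + βinv φ y := (hinv φ x y).1 rfl
    have hkey1 := aux_chain C B hβinv hβ hid2 (φ, y) (ω, 0)
    simp only at hkey1
    rw [← hx] at hkey1
    set DB := fderiv ℝ B (φ, x)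
    set DC := fderiv ℝ C (φ, y)
    set a := DB (ω, 0) with hadef
    set b := DB (0, 1) with hbdef
    set a' := DC (ω, 0) with ha'def
    have e1 : a + a' * b = -a' := by
      rw [aux_decomp DB ω (0 + a')] at hkey1
      simpa [hadef, hbdef, ha'def] using hkey1
    have e3 : a' = V φ x := by
      have := hch φ y
      rw [aux_sum_single ω (fderiv ℝ (fun ψ => βinv ψ y) φ),
        aux_partial_fst βinv hβinv φ y ω] at this
      rw [← hx] at this
      exact this
    have hgoal : a + V φ x * (1 + b) = 0 := by linear_combination e1 - (1 + b) * e3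
    rw [aux_sum_single ω (fderiv ℝ (fun ψ => β ψ x) φ),
      aux_partial_fst β hβ φ x ω, aux_partial_snd β hβ φ x]
    exact hgoal
end

section
/- (Automatic second-order Melnikov conditions for large frequencies.) Let 0 < h₁ < h₂, ν ≥ 1 an integer, τ > 0 and K > 0. Then there exists C₀ > 0, depending only on h₁, h₂, τ, K, with the following property. Let h ∈ [h₁,h₂], γ ∈ (0,1], N ≥ 1 a real number, and let ω ∈ ℝ^ν satisfy the Diophantine conditions |ω·ℓ| ≥ 2γ⟨ℓ⟩^{−τ} for all ℓ ∈ ℤ^ν with 0 < |ℓ| ≤ N. Let m ∈ ℝ with |m| ≤ 2 and let (r_j)_{j≥1} be real numbers with √j·|r_j| ≤ K for all j ≥ 1; set μ_j := m·(j·tanh(h·j))^{1/2} + r_j. Then for every ℓ ∈ ℤ^ν with 0 < |ℓ| ≤ N and all positive integers j, j' with |j − j'| ≤ N and min{j, j'} ≥ C₀·N^{2(τ+1)}·γ^{−2}, one has |ω·ℓ + μ_j − μ_{j'}| ≥ γ⟨ℓ⟩^{−τ}. -/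
/-- ⟨ℓ⟩ := max{1, max_i |ℓ_i|} for an integer vector ℓ ∈ ℤ^ν. -/
noncomputable def brakF {ν : ℕ} (ℓ : Fin ν → ℤ) : ℝ :=
  ((max 1 (Finset.univ.sup fun i => (ℓ i).natAbs) : ℕ) : ℝ)

private lemma tanh_formula (x : ℝ) : Real.tanh x = 1 - 2 / (Real.exp (2*x) + 1) := by
  rw [Real.tanh_eq_sinh_div_cosh, Real.sinh_eq, Real.cosh_eq]
  have h1 : (0:ℝ) < Real.exp x := Real.exp_pos x
  have h3 : (0:ℝ) < Real.exp (2*x) + 1 := by positivity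
  have h2 : Real.exp (2*x) = Real.exp x * Real.exp x := by rw [two_mul, Real.exp_add]
  have h4 : Real.exp (-x) = (Real.exp x)⁻¹ := Real.exp_neg x
  rw [h4] at *
  have h5 : (0:ℝ) < Real.exp x + (Real.exp x)⁻¹ := by positivity
  field_simp
  nlinarith [h2]

private lemma tanh_mono' {x y : ℝ} (hxy : x ≤ y) : Real.tanh x ≤ Real.tanh y := by
  rw [tanh_formula, tanh_formula]
  have h1 : (0:ℝ) < Real.exp (2*x) + 1 := by positivity
  have h2 : (0:ℝ) < Real.exp (2*y) + 1 := by positivity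
  have h3 : Real.exp (2*x) ≤ Real.exp (2*y) := Real.exp_le_exp.2 (by linarith)
  have : 2 / (Real.exp (2*y) + 1) ≤ 2 / (Real.exp (2*x) + 1) := by
    apply div_le_div_of_nonneg_left (by norm_num) h1 (by linarith)
  linarith

private lemma tanh_le_one' (x : ℝ) : Real.tanh x ≤ 1 := by
  rw [tanh_formula]
  have h1 : (0:ℝ) < Real.exp (2*x) + 1 := by positivity
  have : 0 ≤ 2 / (Real.exp (2*x) + 1) := by positivity
  linarith

private lemma abs_sqrt_sub_sqrt_le {x y d : ℝ} (hx : 0 ≤ x) (hy : 0 ≤ y) (hd : 0 < d)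
    (hle : d ≤ Real.sqrt x + Real.sqrt y) : |Real.sqrt x - Real.sqrt y| ≤ |x - y| / d := by
  rw [le_div_iff₀ hd]
  have key : (Real.sqrt x - Real.sqrt y) * (Real.sqrt x + Real.sqrt y) = x - y := by
    nlinarith [Real.sq_sqrt hx, Real.sq_sqrt hy]
  calc |Real.sqrt x - Real.sqrt y| * d
      ≤ |Real.sqrt x - Real.sqrt y| * (Real.sqrt x + Real.sqrt y) := by
        apply mul_le_mul_of_nonneg_left hle (abs_nonneg _)
    _ = |(Real.sqrt x - Real.sqrt y) * (Real.sqrt x + Real.sqrt y)| := by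
        rw [abs_mul, abs_of_nonneg (by positivity : (0:ℝ) ≤ Real.sqrt x + Real.sqrt y)]
    _ = |x - y| := by rw [key]

set_option maxHeartbeats 4000000 in
/-- Automatic second-order Melnikov conditions for large frequencies: if ω is
γ-Diophantine up to scale N, μ_j = m √(j tanh(h j)) + r_j with |m| ≤ 2 and
√j |r_j| ≤ K, then for 0 < |ℓ| ≤ N, |j − j'| ≤ N and min{j,j'} ≥ C₀ N^{2(τ+1)} γ^{−2},
one has |ω·ℓ + μ_j − μ_{j'}| ≥ γ ⟨ℓ⟩^{−τ}. -/
theorem second_melnikov_large_frequencies (h₁ h₂ : ℝ) (hh₁ : 0 < h₁) (hh : h₁ < h₂)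
    (ν : ℕ) (hν : 1 ≤ ν) (τ K : ℝ) (hτ : 0 < τ) (hK : 0 < K) :
    ∃ C₀ : ℝ, 0 < C₀ ∧ ∀ h ∈ Set.Icc h₁ h₂, ∀ γ : ℝ, 0 < γ → γ ≤ 1 →
      ∀ N : ℝ, 1 ≤ N → ∀ ω : Fin ν → ℝ,
      (∀ ℓ : Fin ν → ℤ, ℓ ≠ 0 →
        ((Finset.univ.sup fun i => (ℓ i).natAbs : ℕ) : ℝ) ≤ N →
        2 * γ * brakF ℓ ^ (-τ) ≤ |∑ i, ω i * (ℓ i : ℝ)|) →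
      ∀ m : ℝ, |m| ≤ 2 → ∀ r : ℕ → ℝ, (∀ j : ℕ, 1 ≤ j → Real.sqrt j * |r j| ≤ K) →
      ∀ ℓ : Fin ν → ℤ, ℓ ≠ 0 →
        ((Finset.univ.sup fun i => (ℓ i).natAbs : ℕ) : ℝ) ≤ N →
      ∀ j j' : ℕ, 1 ≤ j → 1 ≤ j' → |(j : ℝ) - (j' : ℝ)| ≤ N →
        C₀ * N ^ (2 * (τ + 1)) * γ ^ (-(2 : ℝ)) ≤ ((min j j' : ℕ) : ℝ) →
        γ * brakF ℓ ^ (-τ) ≤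
          |(∑ i, ω i * (ℓ i : ℝ)) +
            (m * Real.sqrt ((j : ℝ) * Real.tanh (h * (j : ℝ))) + r j) -
            (m * Real.sqrt ((j' : ℝ) * Real.tanh (h * (j' : ℝ))) + r j')| := by
  set t₀ := Real.tanh h₁ with ht₀def
  have ht₀pos : 0 < t₀ := by
    rw [ht₀def, tanh_formula]
    have h1 : 2 * h₁ + 1 ≤ Real.exp (2*h₁) := by
      have := Real.add_one_le_exp (2*h₁); linarith
    have h2 : (0:ℝ) < Real.exp (2*h₁) + 1 := by positivity
    have : 2 / (Real.exp (2*h₁) + 1) < 1 := by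
      rw [div_lt_one h2]; linarith
    linarith
  have hst₀ : 0 < Real.sqrt t₀ := Real.sqrt_pos.2 ht₀pos
  set B : ℝ := (1 + 2/h₁) / Real.sqrt t₀ + 2*K with hBdef
  have hBpos : 0 < B := by positivity
  refine ⟨max (B^2) 1, lt_of_lt_of_le one_pos (le_max_right _ _), ?_⟩
  intro h hmem γ hγ0 hγ1 N hN ω hdioph m hm r hr ℓ hℓ0 hℓN j j' hj1 hj'1 hjj' hmin
  set C₀ : ℝ := max (B^2) 1 with hC₀def
  have hC₀1 : 1 ≤ C₀ := le_max_right _ _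
  have hC₀B : B^2 ≤ C₀ := le_max_left _ _
  have hN0 : (0:ℝ) < N := lt_of_lt_of_le one_pos hN
  have hh1 : h₁ ≤ h := hmem.1
  -- basic casts
  have hjr : (1:ℝ) ≤ (j:ℝ) := by exact_mod_cast hj1
  have hj'r : (1:ℝ) ≤ (j':ℝ) := by exact_mod_cast hj'1
  set nr : ℝ := ((min j j' : ℕ) : ℝ) with hnrdef
  have hnr1 : (1:ℝ) ≤ nr := by
    rw [hnrdef]
    have : 1 ≤ min j j' := le_min hj1 hj'1
    exact_mod_cast this
  have hnr0 : (0:ℝ) < nr := lt_of_lt_of_le one_pos hnr1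
  have hnrj : nr ≤ (j:ℝ) := by rw [hnrdef]; exact_mod_cast min_le_left j j'
  have hnrj' : nr ≤ (j':ℝ) := by rw [hnrdef]; exact_mod_cast min_le_right j j'
  -- γ ^ (-2) ≥ 1
  have hγinv : 1 ≤ γ ^ (-(2:ℝ)) := by
    have := Real.rpow_le_rpow_of_nonpos hγ0 hγ1 (by norm_num : -(2:ℝ) ≤ 0)
    simpa using this
  -- N ≤ N ^ (2(τ+1))
  have hNpow1 : (0:ℝ) < N ^ (2*(τ+1)) := Real.rpow_pos_of_pos hN0 _
  have hNpow : N ≤ N ^ (2*(τ+1)) := by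
    have := Real.rpow_le_rpow_of_exponent_le hN (by linarith : (1:ℝ) ≤ 2*(τ+1))
    rwa [Real.rpow_one] at this
  -- N ≤ nr
  have hNnr : N ≤ nr := by
    have h1 : N ≤ C₀ * N ^ (2*(τ+1)) * γ ^ (-(2:ℝ)) := by
      have hA : 1 * N ^ (2*(τ+1)) ≤ C₀ * N ^ (2*(τ+1)) :=
        mul_le_mul_of_nonneg_right hC₀1 hNpow1.le
      have hB' : 1 * N ^ (2*(τ+1)) * 1 ≤ C₀ * N ^ (2*(τ+1)) * γ ^ (-(2:ℝ)) :=
        mul_le_mul hA hγinv zero_le_one (by positivity)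
      linarith
    linarith [hmin]
  -- key inequality: B * N ≤ γ * N^(-τ) * √nr
  have hkey : B * N ≤ γ * N ^ (-τ) * Real.sqrt nr := by
    have hB2 : B^2 * N ^ (2*(τ+1)) * γ ^ (-(2:ℝ)) ≤ nr := by
      have : B^2 * N ^ (2*(τ+1)) * γ ^ (-(2:ℝ)) ≤ C₀ * N ^ (2*(τ+1)) * γ ^ (-(2:ℝ)) := by
        have hq : (0:ℝ) < γ ^ (-(2:ℝ)) := lt_of_lt_of_le one_pos hγinv
        exact mul_le_mul_of_nonneg_right
          (mul_le_mul_of_nonneg_right hC₀B hNpow1.le) hq.le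
      linarith [hmin]
    have hx2 : (B * N ^ (τ+1) / γ)^2 = B^2 * N ^ (2*(τ+1)) * γ ^ (-(2:ℝ)) := by
      have e1 : (N ^ (τ+1) : ℝ)^(2:ℕ) = N ^ (2*(τ+1)) := by
        rw [← Real.rpow_natCast (N ^ (τ+1)) 2, ← Real.rpow_mul hN0.le]
        congr 1; push_cast; ring
      have e2 : γ ^ (-(2:ℝ)) = (γ^(2:ℕ))⁻¹ := by
        rw [Real.rpow_neg hγ0.le, ← Real.rpow_natCast γ 2]; norm_num
      rw [e2, ← e1]
      field_simp
    have hxs : B * N ^ (τ+1) / γ ≤ Real.sqrt nr := by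
      rw [Real.le_sqrt (by positivity) hnr0.le, hx2]; exact hB2
    have e3 : N ^ (-τ) * N ^ (τ+1) = N := by
      rw [← Real.rpow_add hN0]; norm_num
    calc B * N = B * (N ^ (-τ) * N ^ (τ+1)) := by rw [e3]
      _ = γ * N ^ (-τ) * (B * N ^ (τ+1) / γ) := by field_simp
      _ ≤ γ * N ^ (-τ) * Real.sqrt nr := by
          apply mul_le_mul_of_nonneg_left hxs (by positivity)
  -- brakF bounds
  have hb1 : (1:ℝ) ≤ brakF ℓ := by
    unfold brakF
    exact_mod_cast Nat.le_max_left 1 _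
  have hbN : brakF ℓ ≤ N := by
    unfold brakF
    push_cast
    exact max_le hN hℓN
  have hNb : N ^ (-τ) ≤ brakF ℓ ^ (-τ) :=
    Real.rpow_le_rpow_of_nonpos (lt_of_lt_of_le one_pos hb1) hbN (by linarith)
  -- tanh bounds
  set a : ℝ := Real.tanh (h * (j:ℝ)) with hadef
  set b : ℝ := Real.tanh (h * (j':ℝ)) with hbdef
  have hha : h₁ ≤ h * (j:ℝ) := by
    have := le_mul_of_one_le_right (by linarith : (0:ℝ) ≤ h) hjr
    linarith
  have hhb : h₁ ≤ h * (j':ℝ) := by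
    have := le_mul_of_one_le_right (by linarith : (0:ℝ) ≤ h) hj'r
    linarith
  have ha0 : t₀ ≤ a := tanh_mono' hha
  have hb0 : t₀ ≤ b := tanh_mono' hhb
  have ha1 : a ≤ 1 := tanh_le_one' _
  have hb1' : b ≤ 1 := tanh_le_one' _
  -- |a - b| ≤ 1/(h₁ * nr)
  have habdiff : |a - b| ≤ 1 / (h₁ * nr) := by
    rw [hadef, hbdef, tanh_formula, tanh_formula]
    have hEa : 2 * h₁ * nr ≤ 2 * (h * (j:ℝ)) := by
      have := mul_le_mul hh1 hnrj hnr0.le (by linarith : (0:ℝ) ≤ h)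
      linarith
    have hEb : 2 * h₁ * nr ≤ 2 * (h * (j':ℝ)) := by
      have := mul_le_mul hh1 hnrj' hnr0.le (by linarith : (0:ℝ) ≤ h)
      linarith
    have hbound : ∀ x : ℝ, 2 * h₁ * nr ≤ x → 2 / (Real.exp x + 1) ≤ 1 / (h₁ * nr) := by
      intro x hx
      have hex : 2 * h₁ * nr + 1 ≤ Real.exp x + 1 := by
        have := Real.add_one_le_exp x; linarith
      rw [div_le_div_iff₀ (by positivity) (by positivity)]
      linarith
    have h1 := hbound _ hEa
    have h2 := hbound _ hEb
    have p1 : (0:ℝ) ≤ 2 / (Real.exp (2*(h*(j:ℝ))) + 1) := by positivity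
    have p2 : (0:ℝ) ≤ 2 / (Real.exp (2*(h*(j':ℝ))) + 1) := by positivity
    rw [abs_sub_le_iff]
    constructor <;> linarith
  -- j' ≤ 2 nr and j ≤ 2 nr
  have hj2nr : (j:ℝ) ≤ 2 * nr ∧ (j':ℝ) ≤ 2 * nr := by
    have hcast : nr = min (j:ℝ) (j':ℝ) := by
      rw [hnrdef]; push_cast; rfl
    rcases le_total (j:ℝ) (j':ℝ) with hc | hc
    · rw [hcast, min_eq_left hc] at *
      rw [abs_sub_comm, abs_of_nonneg (by linarith)] at hjj'
      constructor <;> linarith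
    · rw [hcast, min_eq_right hc] at *
      rw [abs_of_nonneg (by linarith)] at hjj'
      constructor <;> linarith
  -- numerator bound
  have hnum : |(j:ℝ) * a - (j':ℝ) * b| ≤ N + 2 / h₁ := by
    have hsplit : (j:ℝ) * a - (j':ℝ) * b = ((j:ℝ) - (j':ℝ)) * a + (j':ℝ) * (a - b) := by ring
    rw [hsplit]
    have t1 : |((j:ℝ) - (j':ℝ)) * a| ≤ N * 1 := by
      rw [abs_mul]
      apply mul_le_mul hjj' _ (abs_nonneg _) (by linarith)
      rw [abs_of_nonneg (by linarith)]; exact ha1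
    have t2 : |(j':ℝ) * (a - b)| ≤ 2 * nr * (1 / (h₁ * nr)) := by
      rw [abs_mul, abs_of_nonneg (by linarith : (0:ℝ) ≤ (j':ℝ))]
      apply mul_le_mul hj2nr.2 habdiff (abs_nonneg _) (by linarith)
    have e : 2 * nr * (1 / (h₁ * nr)) = 2 / h₁ := by
      field_simp
    calc |((j:ℝ) - (j':ℝ)) * a + (j':ℝ) * (a - b)|
        ≤ |((j:ℝ) - (j':ℝ)) * a| + |(j':ℝ) * (a - b)| := abs_add_le _ _
      _ ≤ N * 1 + 2 * nr * (1 / (h₁ * nr)) := add_le_add t1 t2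
      _ = N + 2 / h₁ := by rw [e]; ring
  -- denominator bound
  have hdenom : 2 * (Real.sqrt t₀ * Real.sqrt nr)
      ≤ Real.sqrt ((j:ℝ) * a) + Real.sqrt ((j':ℝ) * b) := by
    have d1 : Real.sqrt t₀ * Real.sqrt nr ≤ Real.sqrt ((j:ℝ) * a) := by
      rw [← Real.sqrt_mul ht₀pos.le]
      apply Real.sqrt_le_sqrt
      have := mul_le_mul ha0 hnrj hnr0.le (by linarith : (0:ℝ) ≤ a)
      linarith [this]
    have d2 : Real.sqrt t₀ * Real.sqrt nr ≤ Real.sqrt ((j':ℝ) * b) := by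
      rw [← Real.sqrt_mul ht₀pos.le]
      apply Real.sqrt_le_sqrt
      have := mul_le_mul hb0 hnrj' hnr0.le (by linarith : (0:ℝ) ≤ b)
      linarith [this]
    linarith
  -- λ difference
  have hlam : |Real.sqrt ((j:ℝ) * a) - Real.sqrt ((j':ℝ) * b)|
      ≤ (N + 2 / h₁) / (2 * (Real.sqrt t₀ * Real.sqrt nr)) := by
    have := abs_sqrt_sub_sqrt_le (x := (j:ℝ)*a) (y := (j':ℝ)*b)
      (mul_nonneg (by linarith) (by linarith)) (mul_nonneg (by linarith) (by linarith))
      (by positivity) hdenom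
    refine le_trans this ?_
    gcongr
  -- r bounds
  have hsnr : 0 < Real.sqrt nr := Real.sqrt_pos.2 hnr0
  have hrbound : ∀ k : ℕ, 1 ≤ k → nr ≤ (k:ℝ) → |r k| ≤ K / Real.sqrt nr := by
    intro k hk hnk
    have h1 := hr k hk
    have hsj : Real.sqrt nr ≤ Real.sqrt (k:ℝ) := Real.sqrt_le_sqrt hnk
    rw [le_div_iff₀ hsnr]
    calc |r k| * Real.sqrt nr ≤ |r k| * Real.sqrt (k:ℝ) := by
          apply mul_le_mul_of_nonneg_left hsj (abs_nonneg _)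
      _ = Real.sqrt (k:ℝ) * |r k| := mul_comm _ _
      _ ≤ K := h1
  have hrj : |r j| ≤ K / Real.sqrt nr := hrbound j hj1 hnrj
  have hrj' : |r j'| ≤ K / Real.sqrt nr := hrbound j' hj'1 hnrj'
  -- total bound on the perturbation
  set d : ℝ := m * (Real.sqrt ((j:ℝ) * a) - Real.sqrt ((j':ℝ) * b)) + (r j - r j') with hddef
  have habs : |d| ≤ γ * brakF ℓ ^ (-τ) := by
    have s1 : |m * (Real.sqrt ((j:ℝ) * a) - Real.sqrt ((j':ℝ) * b))|
        ≤ 2 * ((N + 2 / h₁) / (2 * (Real.sqrt t₀ * Real.sqrt nr))) := by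
      rw [abs_mul]
      exact mul_le_mul hm hlam (abs_nonneg _) (by norm_num)
    have s2 : |r j - r j'| ≤ 2 * (K / Real.sqrt nr) := by
      calc |r j - r j'| ≤ |r j| + |r j'| := abs_sub _ _
        _ ≤ K / Real.sqrt nr + K / Real.sqrt nr := add_le_add hrj hrj'
        _ = 2 * (K / Real.sqrt nr) := by ring
    have e4 : 2 * ((N + 2 / h₁) / (2 * (Real.sqrt t₀ * Real.sqrt nr))) + 2 * (K / Real.sqrt nr)
        = ((N + 2 / h₁) / Real.sqrt t₀ + 2 * K) / Real.sqrt nr := by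
      field_simp
    have hnum' : (N + 2 / h₁) / Real.sqrt t₀ + 2 * K ≤ B * N := by
      have q1 : (N + 2 / h₁) / Real.sqrt t₀ ≤ ((1 + 2 / h₁) * N) / Real.sqrt t₀ := by
        apply (div_le_div_iff_of_pos_right hst₀).2
        have := mul_le_mul_of_nonneg_left hN (le_of_lt (div_pos two_pos hh₁))
        linarith
      have q2 : ((1 + 2 / h₁) * N) / Real.sqrt t₀ = ((1 + 2 / h₁) / Real.sqrt t₀) * N := by
        ring
      have q3 : 2 * K ≤ 2 * K * N := by
        have := mul_le_mul_of_nonneg_left hN (by positivity : (0:ℝ) ≤ 2*K)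
        linarith
      rw [hBdef]
      rw [q2] at q1
      have hexp : ((1 + 2 / h₁) / Real.sqrt t₀ + 2 * K) * N
          = (1 + 2 / h₁) / Real.sqrt t₀ * N + 2 * K * N := by ring
      linarith [hexp.ge]
    have e5 : ((N + 2 / h₁) / Real.sqrt t₀ + 2 * K) / Real.sqrt nr ≤ B * N / Real.sqrt nr := by
      gcongr
    have e6 : B * N / Real.sqrt nr ≤ γ * N ^ (-τ) := by
      rw [div_le_iff₀ hsnr]
      exact hkey
    have e7 : γ * N ^ (-τ) ≤ γ * brakF ℓ ^ (-τ) :=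
      mul_le_mul_of_nonneg_left hNb hγ0.le
    calc |d| ≤ |m * (Real.sqrt ((j:ℝ) * a) - Real.sqrt ((j':ℝ) * b))| + |r j - r j'| :=
          abs_add_le _ _
      _ ≤ 2 * ((N + 2 / h₁) / (2 * (Real.sqrt t₀ * Real.sqrt nr))) + 2 * (K / Real.sqrt nr) :=
          add_le_add s1 s2
      _ = ((N + 2 / h₁) / Real.sqrt t₀ + 2 * K) / Real.sqrt nr := e4
      _ ≤ B * N / Real.sqrt nr := e5
      _ ≤ γ * N ^ (-τ) := e6
      _ ≤ γ * brakF ℓ ^ (-τ) := e7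
  -- conclude
  set S : ℝ := ∑ i, ω i * (ℓ i : ℝ) with hSdef
  have hS := hdioph ℓ hℓ0 hℓN
  have hrw : S + (m * Real.sqrt ((j:ℝ) * a) + r j) - (m * Real.sqrt ((j':ℝ) * b) + r j')
      = S + d := by rw [hddef]; ring
  rw [hrw]
  have h6 : |S| ≤ |S + d| + |d| := by
    have := abs_add_le (S + d) (-d)
    simpa using this
  linarith
end
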